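/- arXiv:2301.04532 — 3 statements merged into one kernel-verified Lean document; each statement's English description precedes it below -/
import Mathlib

section
/- Relation between shifted tadpole Nahm sums: for |q|<1, ∑_{i,j,k≥0} q^{i^2+j^2+(k^2-k)/2 - ij - jk - i + j} / ((q;q)_i (q;q)_j (q;q)_k) = 2 ∑_{i,j,k≥0} q^{i^2+j^2+(k^2+k)/2 - ij - jk + i - j} / ((q;q)_i (q;q)_j (q;q)_k). -/
/-- Finite q-Pochhammer symbol `(a;q)_n`. -/
noncomputable def qPoch (a q : ℂ) (n : ℕ) : ℂ := ∏ k ∈ Finset.range n, (1 - a * q ^ k)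

namespace NahmTad

/-- Triangular number as an integer. -/
def tri (k : ℕ) : ℤ := ((k : ℤ) * (k + 1)) / 2

lemma two_tri (k : ℕ) : 2 * tri k = (k : ℤ) * (k + 1) :=
  Int.mul_ediv_cancel' (Int.even_mul_succ_self (k : ℤ)).two_dvd

lemma tri_eq_add (k : ℕ) : ((k : ℤ) ^ 2 + (k : ℤ)) / 2 = tri k := by
  have h : (k : ℤ) ^ 2 + (k : ℤ) = 2 * tri k := by linear_combination -two_tri k
  rw [h, Int.mul_ediv_cancel_left _ two_ne_zero]

lemma tri_eq_sub (k : ℕ) : ((k : ℤ) ^ 2 - (k : ℤ)) / 2 = tri k - k := by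
  have h : (k : ℤ) ^ 2 - (k : ℤ) = 2 * (tri k - k) := by linear_combination -two_tri k
  rw [h, Int.mul_ediv_cancel_left _ two_ne_zero]

/-- Exponent of the shifted tadpole Nahm sum. -/
def Ee (α β γ : ℤ) (i j k : ℕ) : ℤ :=
  (i : ℤ) ^ 2 + (j : ℤ) ^ 2 + tri k - (i : ℤ) * (j : ℤ) - (j : ℤ) * (k : ℤ)
    + α * i + β * j + γ * k

/-- Summand of the shifted tadpole Nahm sum. -/
noncomputable def S (q : ℂ) (α β γ : ℤ) (p : ℕ × ℕ × ℕ) : ℂ :=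
  q ^ Ee α β γ p.1 p.2.1 p.2.2 / (qPoch q q p.1 * qPoch q q p.2.1 * qPoch q q p.2.2)

section

variable {q : ℂ} (hq0 : q ≠ 0) (hq : ‖q‖ < 1)

lemma qPoch_succ (n : ℕ) : qPoch q q (n + 1) = qPoch q q n * (1 - q ^ (n + 1)) := by
  rw [qPoch, Finset.prod_range_succ, ← pow_succ']
  rfl

include hq in
lemma le_norm_qPoch (n : ℕ) : (1 - ‖q‖) ^ n ≤ ‖qPoch q q n‖ := by
  rw [qPoch]
  calc (1 - ‖q‖) ^ n = ∏ _m ∈ Finset.range n, (1 - ‖q‖) := by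
        rw [Finset.prod_const, Finset.card_range]
    _ ≤ ‖∏ m ∈ Finset.range n, (1 - q * q ^ m)‖ := by
        rw [norm_prod]
        apply Finset.prod_le_prod (fun m _ => by linarith)
        intro m _
        have h1 : ‖q * q ^ m‖ ≤ ‖q‖ := by
          rw [norm_mul, norm_pow]
          have : ‖q‖ ^ m ≤ 1 := pow_le_one₀ (norm_nonneg q) hq.le
          nlinarith [norm_nonneg q]
        have h2 := norm_sub_norm_le (1 : ℂ) (q * q ^ m)
        simp only [norm_one] at h2
        linarith

include hq in
lemma qPoch_ne_zero (n : ℕ) : qPoch q q n ≠ 0 := by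
  have h1 : (0 : ℝ) < (1 - ‖q‖) ^ n := pow_pos (by linarith) n
  have := le_norm_qPoch hq n
  intro h
  rw [h, norm_zero] at this
  linarith

include hq in
lemma one_sub_q_pow_ne_zero (n : ℕ) : (1 : ℂ) - q ^ (n + 1) ≠ 0 := by
  intro h
  have h1 : q ^ (n + 1) = 1 := by linear_combination -h
  have h2 : ‖q ^ (n + 1)‖ < 1 := by
    rw [norm_pow]
    exact pow_lt_one₀ (norm_nonneg q) hq (Nat.succ_ne_zero n)
  rw [h1, norm_one] at h2
  exact lt_irrefl _ h2

include hq0 hq in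
lemma summable_S (α β γ : ℤ) : Summable (S q α β γ) := by
  have hr0 : 0 < ‖q‖ := norm_pos_iff.mpr hq0
  have h1r : 0 < 1 - ‖q‖ := by linarith
  obtain ⟨c, hc⟩ : ∃ c : ℕ, ‖q‖ ^ c < 1 - ‖q‖ := exists_pow_lt_of_lt_one h1r hq
  set r : ℝ := ‖q‖ with hr
  set w : ℝ := r ^ c / (1 - r) with hw
  have hw0 : 0 ≤ w := by positivity
  have hw1 : w < 1 := (div_lt_one h1r).mpr hc
  set D : ℤ := 3 * ((c : ℤ) - α) ^ 2 + 3 * ((c : ℤ) - β) ^ 2 + 3 * ((c : ℤ) - γ) ^ 2 with hD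
  have hgeo : Summable (fun n : ℕ => w ^ n) := summable_geometric_of_lt_one hw0 hw1
  have hgeo0 : (0 : ℕ → ℝ) ≤ fun n : ℕ => w ^ n := fun n => pow_nonneg hw0 n
  have h2 : Summable (fun y : ℕ × ℕ => w ^ y.1 * w ^ y.2) :=
    Summable.mul_of_nonneg hgeo hgeo hgeo0 hgeo0
  have h20 : (0 : ℕ × ℕ → ℝ) ≤ fun y : ℕ × ℕ => w ^ y.1 * w ^ y.2 :=
    fun y => mul_nonneg (pow_nonneg hw0 _) (pow_nonneg hw0 _)
  have h3 : Summable (fun p : ℕ × ℕ × ℕ => w ^ p.1 * (w ^ p.2.1 * w ^ p.2.2)) :=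
    Summable.mul_of_nonneg (f := fun n : ℕ => w ^ n)
      (g := fun y : ℕ × ℕ => w ^ y.1 * w ^ y.2) hgeo h2 hgeo0 h20
  apply Summable.of_norm_bounded
    (g := fun p : ℕ × ℕ × ℕ => r ^ (-D) * (w ^ p.1 * (w ^ p.2.1 * w ^ p.2.2)))
  · exact h3.mul_left _
  · rintro ⟨i, j, k⟩
    have hQ : (i : ℤ) ^ 2 + (j : ℤ) ^ 2 + (k : ℤ) ^ 2
        ≤ 12 * ((i : ℤ) ^ 2 + (j : ℤ) ^ 2 + tri k - (i : ℤ) * j - (j : ℤ) * k) := by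
      have h2 := two_tri k
      have hk0 : (0 : ℤ) ≤ (k : ℤ) := Int.natCast_nonneg k
      nlinarith [sq_nonneg (11 * (i : ℤ) - 6 * (j : ℤ)), sq_nonneg (85 * (j : ℤ) - 66 * (k : ℤ)),
        sq_nonneg ((k : ℤ))]
    have hEe : (c : ℤ) * ((i : ℤ) + (j : ℤ) + (k : ℤ)) - D ≤ Ee α β γ i j k := by
      rw [Ee, hD]
      nlinarith [hQ, sq_nonneg ((i : ℤ) - 6 * ((c : ℤ) - α)),
        sq_nonneg ((j : ℤ) - 6 * ((c : ℤ) - β)), sq_nonneg ((k : ℤ) - 6 * ((c : ℤ) - γ))]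
    have hPi := le_norm_qPoch hq i
    have hPj := le_norm_qPoch hq j
    have hPk := le_norm_qPoch hq k
    have hPi0 : (0:ℝ) < (1 - r) ^ i := pow_pos h1r i
    have hPj0 : (0:ℝ) < (1 - r) ^ j := pow_pos h1r j
    have hPk0 : (0:ℝ) < (1 - r) ^ k := pow_pos h1r k
    have hnorm : ‖S q α β γ (i, j, k)‖
        = r ^ Ee α β γ i j k / (‖qPoch q q i‖ * ‖qPoch q q j‖ * ‖qPoch q q k‖) := by
      rw [S, norm_div, norm_mul, norm_mul, norm_zpow]
    rw [hnorm]
    have hnum : r ^ Ee α β γ i j k ≤ r ^ ((c : ℤ) * ((i : ℤ) + (j : ℤ) + (k : ℤ)) - D) := by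
      exact (zpow_right_strictAnti₀ hr0 hq).antitone hEe
    have hden : (1 - r) ^ i * (1 - r) ^ j * (1 - r) ^ k
        ≤ ‖qPoch q q i‖ * ‖qPoch q q j‖ * ‖qPoch q q k‖ := by
      have h1 := mul_le_mul hPi hPj hPj0.le (norm_nonneg _)
      exact mul_le_mul h1 hPk hPk0.le (mul_nonneg (norm_nonneg _) (norm_nonneg _))
    calc r ^ Ee α β γ i j k / (‖qPoch q q i‖ * ‖qPoch q q j‖ * ‖qPoch q q k‖)
        ≤ r ^ ((c : ℤ) * ((i : ℤ) + (j : ℤ) + (k : ℤ)) - D)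
            / ((1 - r) ^ i * (1 - r) ^ j * (1 - r) ^ k) :=
          div_le_div₀ (zpow_nonneg hr0.le _) hnum (by positivity) hden
      _ = r ^ (-D) * (w ^ i * (w ^ j * w ^ k)) := by
          have hcast : (c : ℤ) * ((i : ℤ) + (j : ℤ) + (k : ℤ)) = ((c * (i + j + k) : ℕ) : ℤ) := by
            push_cast; ring
          rw [zpow_sub₀ hr0.ne', hcast, zpow_natCast, pow_mul, zpow_neg]
          rw [hw]
          rw [div_pow, div_pow, div_pow]
          rw [pow_add, pow_add]
          field_simp

end

/-- The shifted tadpole Nahm sum as a `tsum` over `ℕ × ℕ × ℕ`. -/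
noncomputable def T (q : ℂ) (α β γ : ℤ) : ℂ := ∑' p : ℕ × ℕ × ℕ, S q α β γ p

section

variable {q : ℂ} (hq0 : q ≠ 0) (hq : ‖q‖ < 1)

include hq0 hq in
lemma recur_i (α β γ : ℤ) :
    T q α β γ = T q (α + 1) β γ + q ^ ((1:ℤ) + α) * T q (α + 2) (β - 1) γ := by
  have h1 : T q α β γ - T q (α + 1) β γ
      = ∑' p : ℕ × ℕ × ℕ, S q α β γ p * (1 - q ^ p.1) := by
    rw [T, T, ← Summable.tsum_sub (summable_S hq0 hq α β γ) (summable_S hq0 hq (α + 1) β γ)]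
    refine tsum_congr fun p => ?_
    have hE : Ee (α + 1) β γ p.1 p.2.1 p.2.2 = Ee α β γ p.1 p.2.1 p.2.2 + p.1 := by
      rw [Ee, Ee]; ring
    rw [S, S, hE, zpow_add₀ hq0, zpow_natCast]
    ring
  have h2 : (∑' p : ℕ × ℕ × ℕ, S q α β γ p * (1 - q ^ p.1))
      = q ^ ((1:ℤ) + α) * T q (α + 2) (β - 1) γ := by
    rw [T, ← tsum_mul_left]
    have hinj : Function.Injective (fun p : ℕ × ℕ × ℕ => (p.1 + 1, p.2.1, p.2.2)) := by
      rintro ⟨a1, a2, a3⟩ ⟨b1, b2, b3⟩ h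
      simp only [Prod.mk.injEq] at h
      simp only [Prod.mk.injEq]
      omega
    rw [← hinj.tsum_eq ?_]
    · refine tsum_congr fun p => ?_
      obtain ⟨i, j, k⟩ := p
      show S q α β γ (i + 1, j, k) * (1 - q ^ (i + 1))
          = q ^ ((1:ℤ) + α) * S q (α + 2) (β - 1) γ (i, j, k)
      have hE : Ee α β γ (i + 1) j k = (1 + α) + Ee (α + 2) (β - 1) γ i j k := by
        rw [Ee, Ee]; push_cast; ring
      rw [S, S, hE, zpow_add₀ hq0]
      show q ^ ((1:ℤ) + α) * q ^ Ee (α + 2) (β - 1) γ i j k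
            / (qPoch q q (i + 1) * qPoch q q j * qPoch q q k) * (1 - q ^ (i + 1))
          = q ^ ((1:ℤ) + α) * (q ^ Ee (α + 2) (β - 1) γ i j k
            / (qPoch q q i * qPoch q q j * qPoch q q k))
      rw [qPoch_succ]
      have hne := one_sub_q_pow_ne_zero hq i
      have hi := qPoch_ne_zero hq i
      have hj := qPoch_ne_zero hq j
      have hk := qPoch_ne_zero hq k
      field_simp
    · intro p hp
      obtain ⟨i, j, k⟩ := p
      match i with
      | 0 =>
        exfalso
        apply hp
        show S q α β γ (0, j, k) * (1 - q ^ (0:ℕ)) = 0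
        simp
      | i + 1 => exact ⟨(i, j, k), rfl⟩
  linear_combination h1 + h2

lemma tri_succ (k : ℕ) : tri (k + 1) = tri k + ((k : ℤ) + 1) := by
  have a := two_tri (k + 1)
  have b := two_tri k
  push_cast at a
  have h : 2 * tri (k + 1) = 2 * (tri k + ((k : ℤ) + 1)) := by linear_combination a - b
  omega

include hq0 hq in
lemma recur_j (α β γ : ℤ) :
    T q α β γ = T q α (β + 1) γ + q ^ ((1:ℤ) + β) * T q (α - 1) (β + 2) (γ - 1) := by
  have h1 : T q α β γ - T q α (β + 1) γ
      = ∑' p : ℕ × ℕ × ℕ, S q α β γ p * (1 - q ^ p.2.1) := by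
    rw [T, T, ← Summable.tsum_sub (summable_S hq0 hq α β γ) (summable_S hq0 hq α (β + 1) γ)]
    refine tsum_congr fun p => ?_
    have hE : Ee α (β + 1) γ p.1 p.2.1 p.2.2 = Ee α β γ p.1 p.2.1 p.2.2 + p.2.1 := by
      rw [Ee, Ee]; ring
    rw [S, S, hE, zpow_add₀ hq0, zpow_natCast]
    ring
  have h2 : (∑' p : ℕ × ℕ × ℕ, S q α β γ p * (1 - q ^ p.2.1))
      = q ^ ((1:ℤ) + β) * T q (α - 1) (β + 2) (γ - 1) := by
    rw [T, ← tsum_mul_left]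
    have hinj : Function.Injective (fun p : ℕ × ℕ × ℕ => (p.1, p.2.1 + 1, p.2.2)) := by
      rintro ⟨a1, a2, a3⟩ ⟨b1, b2, b3⟩ h
      simp only [Prod.mk.injEq] at h
      simp only [Prod.mk.injEq]
      omega
    rw [← hinj.tsum_eq ?_]
    · refine tsum_congr fun p => ?_
      obtain ⟨i, j, k⟩ := p
      show S q α β γ (i, j + 1, k) * (1 - q ^ (j + 1))
          = q ^ ((1:ℤ) + β) * S q (α - 1) (β + 2) (γ - 1) (i, j, k)
      have hE : Ee α β γ i (j + 1) k = (1 + β) + Ee (α - 1) (β + 2) (γ - 1) i j k := by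
        rw [Ee, Ee]; push_cast; ring
      rw [S, S, hE, zpow_add₀ hq0]
      show q ^ ((1:ℤ) + β) * q ^ Ee (α - 1) (β + 2) (γ - 1) i j k
            / (qPoch q q i * qPoch q q (j + 1) * qPoch q q k) * (1 - q ^ (j + 1))
          = q ^ ((1:ℤ) + β) * (q ^ Ee (α - 1) (β + 2) (γ - 1) i j k
            / (qPoch q q i * qPoch q q j * qPoch q q k))
      rw [qPoch_succ]
      have hne := one_sub_q_pow_ne_zero hq j
      have hi := qPoch_ne_zero hq i
      have hj := qPoch_ne_zero hq j
      have hk := qPoch_ne_zero hq k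
      field_simp
    · intro p hp
      obtain ⟨i, j, k⟩ := p
      match j with
      | 0 =>
        exfalso
        apply hp
        show S q α β γ (i, 0, k) * (1 - q ^ (0:ℕ)) = 0
        simp
      | j + 1 => exact ⟨(i, j, k), rfl⟩
  linear_combination h1 + h2

include hq0 hq in
lemma recur_k (α β γ : ℤ) :
    T q α β γ = T q α β (γ + 1) + q ^ ((1:ℤ) + γ) * T q α (β - 1) (γ + 1) := by
  have h1 : T q α β γ - T q α β (γ + 1)
      = ∑' p : ℕ × ℕ × ℕ, S q α β γ p * (1 - q ^ p.2.2) := by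
    rw [T, T, ← Summable.tsum_sub (summable_S hq0 hq α β γ) (summable_S hq0 hq α β (γ + 1))]
    refine tsum_congr fun p => ?_
    have hE : Ee α β (γ + 1) p.1 p.2.1 p.2.2 = Ee α β γ p.1 p.2.1 p.2.2 + p.2.2 := by
      rw [Ee, Ee]; ring
    rw [S, S, hE, zpow_add₀ hq0, zpow_natCast]
    ring
  have h2 : (∑' p : ℕ × ℕ × ℕ, S q α β γ p * (1 - q ^ p.2.2))
      = q ^ ((1:ℤ) + γ) * T q α (β - 1) (γ + 1) := by
    rw [T, ← tsum_mul_left]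
    have hinj : Function.Injective (fun p : ℕ × ℕ × ℕ => (p.1, p.2.1, p.2.2 + 1)) := by
      rintro ⟨a1, a2, a3⟩ ⟨b1, b2, b3⟩ h
      simp only [Prod.mk.injEq] at h
      simp only [Prod.mk.injEq]
      omega
    rw [← hinj.tsum_eq ?_]
    · refine tsum_congr fun p => ?_
      obtain ⟨i, j, k⟩ := p
      show S q α β γ (i, j, k + 1) * (1 - q ^ (k + 1))
          = q ^ ((1:ℤ) + γ) * S q α (β - 1) (γ + 1) (i, j, k)
      have hE : Ee α β γ i j (k + 1) = (1 + γ) + Ee α (β - 1) (γ + 1) i j k := by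
        rw [Ee, Ee, tri_succ]; push_cast; ring
      rw [S, S, hE, zpow_add₀ hq0]
      show q ^ ((1:ℤ) + γ) * q ^ Ee α (β - 1) (γ + 1) i j k
            / (qPoch q q i * qPoch q q j * qPoch q q (k + 1)) * (1 - q ^ (k + 1))
          = q ^ ((1:ℤ) + γ) * (q ^ Ee α (β - 1) (γ + 1) i j k
            / (qPoch q q i * qPoch q q j * qPoch q q k))
      rw [qPoch_succ]
      have hne := one_sub_q_pow_ne_zero hq k
      have hi := qPoch_ne_zero hq i
      have hj := qPoch_ne_zero hq j
      have hk := qPoch_ne_zero hq k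
      field_simp
    · intro p hp
      obtain ⟨i, j, k⟩ := p
      match k with
      | 0 =>
        exfalso
        apply hp
        show S q α β γ (i, j, 0) * (1 - q ^ (0:ℕ)) = 0
        simp
      | k + 1 => exact ⟨(i, j, k), rfl⟩
  linear_combination h1 + h2

include hq0 hq in
lemma T_eq_iterated (α β γ : ℤ) :
    T q α β γ = ∑' (i : ℕ) (j : ℕ) (k : ℕ), S q α β γ (i, j, k) := by
  rw [T, Summable.tsum_prod (summable_S hq0 hq α β γ)]
  exact tsum_congr fun i => Summable.tsum_prod ((summable_S hq0 hq α β γ).prod_factor i)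

end

end NahmTad

/-- Relation `χ₀(q⁻¹,q,q^{-1/2};q) = 2 χ₀(q,q⁻¹,q^{1/2};q)` between shifted
    rank-3 tadpole Nahm sums. -/
theorem nahm_relation_1 (q : ℂ) (hq0 : q ≠ 0) (hq : ‖q‖ < 1) :
    ∑' (i : ℕ) (j : ℕ) (k : ℕ),
        q ^ ((i : ℤ) ^ 2 + (j : ℤ) ^ 2 + ((k : ℤ) ^ 2 - (k : ℤ)) / 2
              - (i : ℤ) * (j : ℤ) - (j : ℤ) * (k : ℤ) - (i : ℤ) + (j : ℤ))
          / (qPoch q q i * qPoch q q j * qPoch q q k)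
      = 2 * ∑' (i : ℕ) (j : ℕ) (k : ℕ),
            q ^ ((i : ℤ) ^ 2 + (j : ℤ) ^ 2 + ((k : ℤ) ^ 2 + (k : ℤ)) / 2
                  - (i : ℤ) * (j : ℤ) - (j : ℤ) * (k : ℤ) + (i : ℤ) - (j : ℤ))
              / (qPoch q q i * qPoch q q j * qPoch q q k) := by
  have hq' : ‖q‖ < 1 := hq
  have hL : NahmTad.T q (-1) 1 (-1)
      = ∑' (i : ℕ) (j : ℕ) (k : ℕ),
          q ^ ((i : ℤ) ^ 2 + (j : ℤ) ^ 2 + ((k : ℤ) ^ 2 - (k : ℤ)) / 2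
                - (i : ℤ) * (j : ℤ) - (j : ℤ) * (k : ℤ) - (i : ℤ) + (j : ℤ))
            / (qPoch q q i * qPoch q q j * qPoch q q k) := by
    rw [NahmTad.T_eq_iterated hq0 hq']
    refine tsum_congr fun i => tsum_congr fun j => tsum_congr fun k => ?_
    rw [NahmTad.S]
    congr 2
    rw [NahmTad.tri_eq_sub k, NahmTad.Ee]
    ring
  have hR : NahmTad.T q 1 (-1) 0
      = ∑' (i : ℕ) (j : ℕ) (k : ℕ),
          q ^ ((i : ℤ) ^ 2 + (j : ℤ) ^ 2 + ((k : ℤ) ^ 2 + (k : ℤ)) / 2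
                - (i : ℤ) * (j : ℤ) - (j : ℤ) * (k : ℤ) + (i : ℤ) - (j : ℤ))
            / (qPoch q q i * qPoch q q j * qPoch q q k) := by
    rw [NahmTad.T_eq_iterated hq0 hq']
    refine tsum_congr fun i => tsum_congr fun j => tsum_congr fun k => ?_
    rw [NahmTad.S]
    congr 2
    rw [NahmTad.tri_eq_add k, NahmTad.Ee]
    ring
  rw [← hL, ← hR]
  have h1 := NahmTad.recur_k hq0 hq' 0 1 (-1)
  have h2 := NahmTad.recur_j hq0 hq' 1 (-1) 0
  have h3 := NahmTad.recur_i hq0 hq' (-1) 1 0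
  have h4 := NahmTad.recur_i hq0 hq' (-1) 0 0
  have h5 := NahmTad.recur_k hq0 hq' (-1) 1 (-1)
  norm_num at h1 h2 h3 h4 h5
  linear_combination h5 + h3 + h4 - h1 - h2
end

section
/- Relation between shifted tadpole Nahm sums: for |q|<1, ∑_{i,j,k≥0} q^{i^2+j^2+(k^2-k)/2 - ij - jk - 2i + 2j} / ((q;q)_i (q;q)_j (q;q)_k) = 2q^{-1} ∑_{i,j,k≥0} q^{i^2+j^2+(k^2+k)/2 - ij - jk} / ((q;q)_i (q;q)_j (q;q)_k). -/
namespace NahmAux2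

lemma prod_one_sub_ge (s : Finset ℕ) (t : ℕ → ℝ) (h0 : ∀ m ∈ s, 0 ≤ t m)
    (h1 : ∀ m ∈ s, t m ≤ 1) : 1 - ∑ m ∈ s, t m ≤ ∏ m ∈ s, (1 - t m) := by
  induction s using Finset.cons_induction with
  | empty => simp
  | cons a s ha ih =>
    rw [Finset.sum_cons, Finset.prod_cons]
    have h0a := h0 a (Finset.mem_cons_self a s)
    have h1a := h1 a (Finset.mem_cons_self a s)
    have ih' := ih (fun m hm => h0 m (Finset.mem_cons_of_mem hm))
      (fun m hm => h1 m (Finset.mem_cons_of_mem hm))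
    have hs0 : 0 ≤ ∑ m ∈ s, t m :=
      Finset.sum_nonneg fun m hm => h0 m (Finset.mem_cons_of_mem hm)
    have hp0 : 0 ≤ ∏ m ∈ s, (1 - t m) :=
      Finset.prod_nonneg fun m hm => by
        have := h1 m (Finset.mem_cons_of_mem hm); linarith
    nlinarith

lemma qPoch_factor_norm {q : ℂ} (m : ℕ) : 1 - ‖q‖ ^ (m + 1) ≤ ‖1 - q * q ^ m‖ := by
  calc 1 - ‖q‖ ^ (m + 1) = 1 - ‖q * q ^ m‖ := by rw [norm_mul, norm_pow, pow_succ']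
  _ ≤ ‖1 - q * q ^ m‖ := by
      have := norm_sub_norm_le (1 : ℂ) (q * q ^ m)
      simpa using this

lemma qPoch_norm_lower {q : ℂ} (hq : ‖q‖ < 1) :
    ∃ c : ℝ, 0 < c ∧ ∀ n, c ≤ ‖qPoch q q n‖ := by
  have hx0 : (0:ℝ) ≤ ‖q‖ := norm_nonneg q
  set x := ‖q‖ with hxdef
  have hx1 : ∀ m : ℕ, x ^ (m+1) ≤ 1 := fun m => pow_le_one₀ hx0 hq.le
  have hx1' : ∀ m : ℕ, 0 ≤ 1 - x ^ (m+1) := fun m => by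
    have := hx1 m; linarith
  obtain ⟨M, hM⟩ : ∃ M : ℕ, x ^ M < (1 - x) / 2 :=
    exists_pow_lt_of_lt_one (by linarith) hq
  set P : ℝ := ∏ m ∈ Finset.range M, (1 - x ^ (m+1)) with hP
  have hPpos : 0 < P := Finset.prod_pos fun m _ => by
    have : x ^ (m+1) < 1 := pow_lt_one₀ hx0 hq (Nat.succ_ne_zero m)
    linarith
  have key : ∀ n, P / 2 ≤ ∏ m ∈ Finset.range n, (1 - x ^ (m+1)) := by
    intro n
    rcases le_or_gt n M with hnM | hMn
    · -- P ≤ prod over range n, since extra factors ≤ 1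
      have hsplitP : (∏ m ∈ Finset.range n, (1 - x ^ (m+1)))
          * ∏ m ∈ Finset.Ico n M, (1 - x ^ (m+1)) = P :=
        Finset.prod_range_mul_prod_Ico _ hnM
      have hle1 : ∏ m ∈ Finset.Ico n M, (1 - x ^ (m+1)) ≤ 1 :=
        Finset.prod_le_one (fun m _ => hx1' m) (fun m _ => by linarith [pow_nonneg hx0 (m+1)])
      have hnn : 0 ≤ ∏ m ∈ Finset.range n, (1 - x ^ (m+1)) :=
        Finset.prod_nonneg fun m _ => hx1' m
      nlinarith
    · -- split range n = range M ∪ Ico M n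
      have hsplit : P * ∏ m ∈ Finset.Ico M n, (1 - x ^ (m+1))
          = ∏ m ∈ Finset.range n, (1 - x ^ (m+1)) :=
        Finset.prod_range_mul_prod_Ico _ hMn.le
      have hsum : ∑ m ∈ Finset.Ico M n, x ^ (m+1) ≤ 1 / 2 := by
        have h1 : ∑ m ∈ Finset.Ico M n, x ^ (m+1)
            = ∑ i ∈ Finset.range (n - M), x ^ (M + i + 1) := by
          rw [Finset.sum_Ico_eq_sum_range]
        have h3 : ∑ i ∈ Finset.range (n - M), x ^ (M + i + 1)
            = x ^ M * x * ∑ i ∈ Finset.range (n - M), x ^ i := by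
          rw [Finset.mul_sum]
          exact Finset.sum_congr rfl fun i _ => by ring
        have hgeom : ∑ i ∈ Finset.range (n - M), x ^ i ≤ (1 - x)⁻¹ := by
          have hs : Summable fun i : ℕ => x ^ i := summable_geometric_of_lt_one hx0 hq
          calc ∑ i ∈ Finset.range (n - M), x ^ i
              ≤ ∑' i : ℕ, x ^ i := Summable.sum_le_tsum _ (fun i _ => pow_nonneg hx0 i) hs
            _ = (1 - x)⁻¹ := tsum_geometric_of_lt_one hx0 hq
        have hxM : 0 ≤ x ^ M := pow_nonneg hx0 M
        have h1x : (0:ℝ) < 1 - x := by linarith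
        have hinv : 0 < (1 - x)⁻¹ := by positivity
        have hsum0 : 0 ≤ ∑ i ∈ Finset.range (n - M), x ^ i :=
          Finset.sum_nonneg fun i _ => pow_nonneg hx0 i
        calc ∑ m ∈ Finset.Ico M n, x ^ (m+1)
            = x ^ M * x * ∑ i ∈ Finset.range (n - M), x ^ i := by rw [h1, h3]
          _ ≤ x ^ M * 1 * (1 - x)⁻¹ := by
              apply mul_le_mul _ hgeom hsum0 (by nlinarith)
              nlinarith
          _ = x ^ M / (1 - x) := by ring
          _ ≤ 1 / 2 := by
              rw [div_le_div_iff₀ h1x (by norm_num)]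
              nlinarith
      have hIco : 1 / 2 ≤ ∏ m ∈ Finset.Ico M n, (1 - x ^ (m+1)) := by
        have := prod_one_sub_ge (Finset.Ico M n) (fun m => x ^ (m+1))
          (fun m _ => pow_nonneg hx0 _) (fun m _ => hx1 m)
        linarith
      calc P / 2 = P * (1/2) := by ring
        _ ≤ P * ∏ m ∈ Finset.Ico M n, (1 - x ^ (m+1)) :=
            mul_le_mul_of_nonneg_left hIco hPpos.le
        _ = ∏ m ∈ Finset.range n, (1 - x ^ (m+1)) := hsplit
  refine ⟨P / 2, by positivity, fun n => ?_⟩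
  calc P / 2 ≤ ∏ m ∈ Finset.range n, (1 - x ^ (m+1)) := key n
    _ ≤ ∏ m ∈ Finset.range n, ‖1 - q * q ^ m‖ :=
        Finset.prod_le_prod (fun m _ => hx1' m) (fun m _ => qPoch_factor_norm m)
    _ = ‖qPoch q q n‖ := by rw [qPoch, norm_prod]

end NahmAux2

namespace NahmAux2

/-- the exponent -/
def E (a b c : ℤ) (i j k : ℕ) : ℤ :=
  (i:ℤ)^2 + (j:ℤ)^2 + ((k:ℤ)^2 + (k:ℤ))/2 - (i:ℤ)*(j:ℤ) - (j:ℤ)*(k:ℤ)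
    + a*(i:ℤ) + b*(j:ℤ) + c*(k:ℤ)

noncomputable def T (q : ℂ) (a b c : ℤ) (p : ℕ × ℕ × ℕ) : ℂ :=
  q ^ (E a b c p.1 p.2.1 p.2.2) / (qPoch q q p.1 * qPoch q q p.2.1 * qPoch q q p.2.2)

lemma sq_div_two (k : ℕ) : 2 * (((k:ℤ)^2 + (k:ℤ))/2) = (k:ℤ)^2 + (k:ℤ) := by
  have h : (2:ℤ) ∣ (k:ℤ)^2 + (k:ℤ) := by
    have := Int.even_mul_succ_self (k:ℤ)
    rcases this with ⟨r, hr⟩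
    exact ⟨r, by nlinarith⟩
  exact Int.mul_ediv_cancel' h

lemma E_ge {a b c : ℤ} (ha : -2 ≤ a) (hb : -1 ≤ b) (hc : -1 ≤ c) (i j k : ℕ) :
    (i:ℤ) + (j:ℤ) + (k:ℤ) - 100 ≤ E a b c i j k := by
  have h2 := sq_div_two k
  have hi : (0:ℤ) ≤ (i:ℤ) := Int.natCast_nonneg i
  have hj : (0:ℤ) ≤ (j:ℤ) := Int.natCast_nonneg j
  have hk : (0:ℤ) ≤ (k:ℤ) := Int.natCast_nonneg k
  have hai : -2 * (i:ℤ) ≤ a * i := by nlinarith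
  have hbj : -1 * (j:ℤ) ≤ b * j := by nlinarith
  have hck : -1 * (k:ℤ) ≤ c * k := by nlinarith
  rw [E]
  nlinarith [sq_nonneg ((i:ℤ) - 7), sq_nonneg ((i:ℤ) - (j:ℤ) + 4), sq_nonneg ((j:ℤ) - (k:ℤ) + 2)]

end NahmAux2

namespace NahmAux2

set_option maxHeartbeats 1000000 in
lemma summable_T {q : ℂ} (hq0 : q ≠ 0) (hq : ‖q‖ < 1) {a b c : ℤ}
    (ha : -2 ≤ a) (hb : -1 ≤ b) (hc : -1 ≤ c) : Summable (T q a b c) := by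
  obtain ⟨cP, hcP, hP⟩ := qPoch_norm_lower hq
  have hx0 : (0:ℝ) < ‖q‖ := norm_pos_iff.2 hq0
  set x := ‖q‖ with hxdef
  set C : ℝ := x ^ (-100:ℤ) / cP ^ 3 with hC
  have hC0 : 0 ≤ C := by positivity
  have hgeo : Summable fun n : ℕ => x ^ n := summable_geometric_of_lt_one hx0.le hq
  have hmaj : Summable fun p : ℕ × ℕ × ℕ => C * (x ^ p.1 * (x ^ p.2.1 * x ^ p.2.2)) := by
    refine Summable.mul_left C ?_
    have h2 : Summable fun r : ℕ × ℕ => x ^ r.1 * x ^ r.2 :=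
      Summable.mul_of_nonneg hgeo hgeo (fun n => pow_nonneg hx0.le n)
        (fun n => pow_nonneg hx0.le n)
    exact Summable.mul_of_nonneg hgeo h2 (fun n => pow_nonneg hx0.le n)
      (fun p => mul_nonneg (pow_nonneg hx0.le _) (pow_nonneg hx0.le _))
  refine Summable.of_norm_bounded hmaj ?_
  rintro ⟨i, j, k⟩
  have hnum : ‖q ^ (E a b c i j k)‖ ≤ C * cP ^ 3 * (x ^ i * (x ^ j * x ^ k)) := by
    rw [norm_zpow]
    have h1 : x ^ (E a b c i j k) ≤ x ^ ((i:ℤ) + (j:ℤ) + (k:ℤ) - 100) :=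
      zpow_le_zpow_right_of_le_one₀ hx0 hq.le (E_ge ha hb hc i j k)
    have h2 : x ^ ((i:ℤ) + (j:ℤ) + (k:ℤ) - 100)
        = C * cP ^ 3 * (x ^ i * (x ^ j * x ^ k)) := by
      rw [hC]
      have hcP3 : cP ^ 3 ≠ 0 := by positivity
      rw [div_mul_cancel₀ _ hcP3]
      rw [show (i:ℤ) + (j:ℤ) + (k:ℤ) - 100 = -100 + ((i:ℤ) + ((j:ℤ) + (k:ℤ))) by ring]
      rw [zpow_add₀ (ne_of_gt hx0), zpow_add₀ (ne_of_gt hx0), zpow_add₀ (ne_of_gt hx0)]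
      rw [zpow_natCast, zpow_natCast, zpow_natCast]
    linarith
  have hden : cP ^ 3 ≤ ‖qPoch q q i * qPoch q q j * qPoch q q k‖ := by
    rw [norm_mul, norm_mul]
    nlinarith [hP i, hP j, hP k, norm_nonneg (qPoch q q i), norm_nonneg (qPoch q q j),
      norm_nonneg (qPoch q q k), mul_le_mul (hP i) (hP j) hcP.le
        (le_trans hcP.le (hP i))]
  have hden0 : (0:ℝ) < cP ^ 3 := by positivity
  rw [T, norm_div]
  calc ‖q ^ (E a b c i j k)‖ / ‖qPoch q q i * qPoch q q j * qPoch q q k‖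
      ≤ (C * cP ^ 3 * (x ^ i * (x ^ j * x ^ k))) / cP ^ 3 := by
        apply div_le_div₀ (by positivity) hnum hden0 hden
    _ = C * (x ^ i * (x ^ j * x ^ k)) := by
        rw [mul_right_comm]
        exact mul_div_cancel_right₀ _ (by positivity : (cP:ℝ) ^ 3 ≠ 0)
  
end NahmAux2

namespace NahmAux2

noncomputable def V (q : ℂ) (a b c : ℤ) : ℂ := ∑' p : ℕ × ℕ × ℕ, T q a b c p

lemma one_sub_pow_ne {q : ℂ} (hq : ‖q‖ < 1) (m : ℕ) : (1 : ℂ) - q * q ^ m ≠ 0 := by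
  intro h0
  have h1 := qPoch_factor_norm (q := q) m
  rw [h0, norm_zero] at h1
  have h2 : ‖q‖ ^ (m+1) < 1 := pow_lt_one₀ (norm_nonneg q) hq (Nat.succ_ne_zero m)
  linarith

lemma qPoch_ne_zero {q : ℂ} (hq : ‖q‖ < 1) (n : ℕ) : qPoch q q n ≠ 0 :=
  Finset.prod_ne_zero_iff.2 fun m _ => one_sub_pow_ne hq m

lemma qPoch_succ (q : ℂ) (n : ℕ) :
    qPoch q q (n + 1) = qPoch q q n * (1 - q * q ^ n) := Finset.prod_range_succ _ n

lemma recI {q : ℂ} (hq0 : q ≠ 0) (hq : ‖q‖ < 1) {a b c : ℤ}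
    (ha : -2 ≤ a) (hb : -1 ≤ b) (hc : -1 ≤ c) (ha' : -2 ≤ a + 1) (hb' : -1 ≤ b - 1) :
    V q a b c = V q (a+1) b c + q ^ (a+1) * V q (a+2) (b-1) c := by
  have h1 : Summable (T q a b c) := summable_T hq0 hq ha hb hc
  have h2 : Summable (T q (a+1) b c) := summable_T hq0 hq (by linarith) hb hc
  have h3 : Summable (T q (a+2) (b-1) c) := summable_T hq0 hq (by linarith) hb' hc
  set F : ℕ × ℕ × ℕ → ℂ := fun p => T q a b c p - T q (a+1) b c p with hF
  set ι : ℕ × ℕ × ℕ → ℕ × ℕ × ℕ := fun p => (p.1 + 1, p.2) with hι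
  have hinj : Function.Injective ι := by
    rintro ⟨i, j, k⟩ ⟨i', j', k'⟩ h
    simp only [hι, Prod.mk.injEq] at h
    obtain ⟨h1', h2'⟩ := h
    simp [Nat.succ_injective h1', h2']
  have hsupp : Function.support F ⊆ Set.range ι := by
    rintro ⟨i, j, k⟩ hp
    match i with
    | 0 =>
      exfalso; apply hp
      have hE : E a b c 0 j k = E (a+1) b c 0 j k := by
        simp only [E]; push_cast; ring
      simp only [hF, T, hE, sub_self]
    | i + 1 => exact ⟨(i, j, k), rfl⟩
  have hcomp : ∀ p : ℕ × ℕ × ℕ, F (ι p) = q ^ (a+1) * T q (a+2) (b-1) c p := by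
    rintro ⟨i, j, k⟩
    have eE1 : E a b c (i+1) j k = E (a+2) (b-1) c i j k + (a+1) := by
      simp only [E]; push_cast; ring
    have eE2 : E (a+1) b c (i+1) j k = E (a+2) (b-1) c i j k + (a+1) + (i+1) := by
      simp only [E]; push_cast; ring
    have hPi := qPoch_ne_zero hq i
    have hPj := qPoch_ne_zero hq j
    have hPk := qPoch_ne_zero hq k
    have hfac := one_sub_pow_ne hq i
    have hz1 : q ^ (E (a+2) (b-1) c i j k + (a+1))
        = q ^ (E (a+2) (b-1) c i j k) * q ^ (a+1) := zpow_add₀ hq0 _ _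
    have hz2 : q ^ (E (a+2) (b-1) c i j k + (a+1) + ((i:ℤ)+1))
        = q ^ (E (a+2) (b-1) c i j k) * q ^ (a+1) * (q ^ i * q) := by
      rw [zpow_add₀ hq0 _ ((i:ℤ)+1), hz1, zpow_add₀ hq0 (i:ℤ) 1, zpow_natCast, zpow_one]
    simp only [hF, hι, T, eE1, eE2, qPoch_succ, hz1, hz2]
    field_simp
  have hdiff : ∑' p, F p = V q a b c - V q (a+1) b c := Summable.tsum_sub h1 h2
  have hshift : ∑' p, F (ι p) = ∑' p, F p := hinj.tsum_eq hsupp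
  have hval : ∑' p, F (ι p) = q ^ (a+1) * V q (a+2) (b-1) c := by
    rw [tsum_congr hcomp, tsum_mul_left]; rfl
  have : V q a b c - V q (a+1) b c = q ^ (a+1) * V q (a+2) (b-1) c := by
    rw [← hdiff, ← hshift, hval]
  linear_combination this

end NahmAux2

namespace NahmAux2

lemma recJ {q : ℂ} (hq0 : q ≠ 0) (hq : ‖q‖ < 1) {a b c : ℤ}
    (ha : -2 ≤ a) (hb : -1 ≤ b) (hc : -1 ≤ c) (ha' : -2 ≤ a - 1) (hc' : -1 ≤ c - 1) :
    V q a b c = V q a (b+1) c + q ^ (b+1) * V q (a-1) (b+2) (c-1) := by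
  have h1 : Summable (T q a b c) := summable_T hq0 hq ha hb hc
  have h2 : Summable (T q a (b+1) c) := summable_T hq0 hq ha (by linarith) hc
  have h3 : Summable (T q (a-1) (b+2) (c-1)) := summable_T hq0 hq ha' (by linarith) hc'
  set F : ℕ × ℕ × ℕ → ℂ := fun p => T q a b c p - T q a (b+1) c p with hF
  set ι : ℕ × ℕ × ℕ → ℕ × ℕ × ℕ := fun p => (p.1, p.2.1 + 1, p.2.2) with hι
  have hinj : Function.Injective ι := by
    rintro ⟨i, j, k⟩ ⟨i', j', k'⟩ h
    simp only [hι, Prod.mk.injEq] at h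
    obtain ⟨h1', h2', h3'⟩ := h
    simp [h1', Nat.succ_injective h2', h3']
  have hsupp : Function.support F ⊆ Set.range ι := by
    rintro ⟨i, j, k⟩ hp
    match j with
    | 0 =>
      exfalso; apply hp
      have hE : E a b c i 0 k = E a (b+1) c i 0 k := by
        simp only [E]; push_cast; ring
      simp only [hF, T, hE, sub_self]
    | j + 1 => exact ⟨(i, j, k), rfl⟩
  have hcomp : ∀ p : ℕ × ℕ × ℕ, F (ι p) = q ^ (b+1) * T q (a-1) (b+2) (c-1) p := by
    rintro ⟨i, j, k⟩
    have eE1 : E a b c i (j+1) k = E (a-1) (b+2) (c-1) i j k + (b+1) := by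
      simp only [E]; push_cast; ring
    have eE2 : E a (b+1) c i (j+1) k = E (a-1) (b+2) (c-1) i j k + (b+1) + ((j:ℤ)+1) := by
      simp only [E]; push_cast; ring
    have hPi := qPoch_ne_zero hq i
    have hPj := qPoch_ne_zero hq j
    have hPk := qPoch_ne_zero hq k
    have hfac := one_sub_pow_ne hq j
    have hz1 : q ^ (E (a-1) (b+2) (c-1) i j k + (b+1))
        = q ^ (E (a-1) (b+2) (c-1) i j k) * q ^ (b+1) := zpow_add₀ hq0 _ _
    have hz2 : q ^ (E (a-1) (b+2) (c-1) i j k + (b+1) + ((j:ℤ)+1))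
        = q ^ (E (a-1) (b+2) (c-1) i j k) * q ^ (b+1) * (q ^ j * q) := by
      rw [zpow_add₀ hq0 _ ((j:ℤ)+1), hz1, zpow_add₀ hq0 (j:ℤ) 1, zpow_natCast, zpow_one]
    simp only [hF, hι, T, eE1, eE2, qPoch_succ, hz1, hz2]
    field_simp
  have hdiff : ∑' p, F p = V q a b c - V q a (b+1) c := Summable.tsum_sub h1 h2
  have hshift : ∑' p, F (ι p) = ∑' p, F p := hinj.tsum_eq hsupp
  have hval : ∑' p, F (ι p) = q ^ (b+1) * V q (a-1) (b+2) (c-1) := by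
    rw [tsum_congr hcomp, tsum_mul_left]; rfl
  have : V q a b c - V q a (b+1) c = q ^ (b+1) * V q (a-1) (b+2) (c-1) := by
    rw [← hdiff, ← hshift, hval]
  linear_combination this

lemma k_div_succ (k : ℕ) :
    (((k:ℤ)+1)^2 + ((k:ℤ)+1))/2 = ((k:ℤ)^2+(k:ℤ))/2 + ((k:ℤ)+1) := by
  obtain ⟨t, ht⟩ : (2:ℤ) ∣ (k:ℤ)^2 + (k:ℤ) := ⟨_, (sq_div_two k).symm⟩
  have e : ((k:ℤ)+1)^2 + ((k:ℤ)+1) = ((k:ℤ)^2 + (k:ℤ)) + 2*((k:ℤ)+1) := by ring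
  rw [e, ht]
  omega

lemma recK {q : ℂ} (hq0 : q ≠ 0) (hq : ‖q‖ < 1) {a b c : ℤ}
    (ha : -2 ≤ a) (hb : -1 ≤ b) (hc : -1 ≤ c) (hb' : -1 ≤ b - 1) :
    V q a b c = V q a b (c+1) + q ^ (c+1) * V q a (b-1) (c+1) := by
  have h1 : Summable (T q a b c) := summable_T hq0 hq ha hb hc
  have h2 : Summable (T q a b (c+1)) := summable_T hq0 hq ha hb (by linarith)
  have h3 : Summable (T q a (b-1) (c+1)) := summable_T hq0 hq ha hb' (by linarith)
  set F : ℕ × ℕ × ℕ → ℂ := fun p => T q a b c p - T q a b (c+1) p with hF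
  set ι : ℕ × ℕ × ℕ → ℕ × ℕ × ℕ := fun p => (p.1, p.2.1, p.2.2 + 1) with hι
  have hinj : Function.Injective ι := by
    rintro ⟨i, j, k⟩ ⟨i', j', k'⟩ h
    simp only [hι, Prod.mk.injEq] at h
    obtain ⟨h1', h2', h3'⟩ := h
    simp [h1', h2', Nat.succ_injective h3']
  have hsupp : Function.support F ⊆ Set.range ι := by
    rintro ⟨i, j, k⟩ hp
    match k with
    | 0 =>
      exfalso; apply hp
      have hE : E a b c i j 0 = E a b (c+1) i j 0 := by
        simp only [E]; push_cast; ring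
      simp only [hF, T, hE, sub_self]
    | k + 1 => exact ⟨(i, j, k), rfl⟩
  have hcomp : ∀ p : ℕ × ℕ × ℕ, F (ι p) = q ^ (c+1) * T q a (b-1) (c+1) p := by
    rintro ⟨i, j, k⟩
    have eE1 : E a b c i j (k+1) = E a (b-1) (c+1) i j k + (c+1) := by
      simp only [E]; push_cast; rw [k_div_succ]; ring
    have eE2 : E a b (c+1) i j (k+1) = E a (b-1) (c+1) i j k + (c+1) + ((k:ℤ)+1) := by
      simp only [E]; push_cast; rw [k_div_succ]; ring
    have hPi := qPoch_ne_zero hq i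
    have hPj := qPoch_ne_zero hq j
    have hPk := qPoch_ne_zero hq k
    have hfac := one_sub_pow_ne hq k
    have hz1 : q ^ (E a (b-1) (c+1) i j k + (c+1))
        = q ^ (E a (b-1) (c+1) i j k) * q ^ (c+1) := zpow_add₀ hq0 _ _
    have hz2 : q ^ (E a (b-1) (c+1) i j k + (c+1) + ((k:ℤ)+1))
        = q ^ (E a (b-1) (c+1) i j k) * q ^ (c+1) * (q ^ k * q) := by
      rw [zpow_add₀ hq0 _ ((k:ℤ)+1), hz1, zpow_add₀ hq0 (k:ℤ) 1, zpow_natCast, zpow_one]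
    simp only [hF, hι, T, eE1, eE2, qPoch_succ, hz1, hz2]
    field_simp
  have hdiff : ∑' p, F p = V q a b c - V q a b (c+1) := Summable.tsum_sub h1 h2
  have hshift : ∑' p, F (ι p) = ∑' p, F p := hinj.tsum_eq hsupp
  have hval : ∑' p, F (ι p) = q ^ (c+1) * V q a (b-1) (c+1) := by
    rw [tsum_congr hcomp, tsum_mul_left]; rfl
  have : V q a b c - V q a b (c+1) = q ^ (c+1) * V q a (b-1) (c+1) := by
    rw [← hdiff, ← hshift, hval]
  linear_combination this

end NahmAux2

namespace NahmAux2

lemma tsum_triple {F : ℕ × ℕ × ℕ → ℂ} (h : Summable F) :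
    ∑' p : ℕ × ℕ × ℕ, F p = ∑' (i : ℕ) (j : ℕ) (k : ℕ), F (i, j, k) := by
  rw [Summable.tsum_prod h]
  exact tsum_congr fun i => Summable.tsum_prod (h.prod_factor i)

lemma sq_sub_div_two (k : ℕ) : ((k:ℤ)^2 - (k:ℤ))/2 = ((k:ℤ)^2 + (k:ℤ))/2 - (k:ℤ) := by
  obtain ⟨t, ht⟩ : (2:ℤ) ∣ (k:ℤ)^2 + (k:ℤ) := ⟨_, (sq_div_two k).symm⟩
  rw [show (k:ℤ)^2 - (k:ℤ) = ((k:ℤ)^2 + (k:ℤ)) - 2*(k:ℤ) by ring, ht]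
  omega

end NahmAux2

/-- Relation `χ₀(q⁻²,q²,q^{-1/2};q) = 2 q⁻¹ χ₀(1,1,q^{1/2};q)` between shifted
    rank-3 tadpole Nahm sums. -/
theorem nahm_relation_2 (q : ℂ) (hq0 : q ≠ 0) (hq : ‖q‖ < 1) :
    ∑' (i : ℕ) (j : ℕ) (k : ℕ),
        q ^ ((i : ℤ) ^ 2 + (j : ℤ) ^ 2 + ((k : ℤ) ^ 2 - (k : ℤ)) / 2
              - (i : ℤ) * (j : ℤ) - (j : ℤ) * (k : ℤ) - 2 * (i : ℤ) + 2 * (j : ℤ))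
          / (qPoch q q i * qPoch q q j * qPoch q q k)
      = 2 * q⁻¹ * ∑' (i : ℕ) (j : ℕ) (k : ℕ),
            q ^ ((i : ℤ) ^ 2 + (j : ℤ) ^ 2 + ((k : ℤ) ^ 2 + (k : ℤ)) / 2
                  - (i : ℤ) * (j : ℤ) - (j : ℤ) * (k : ℤ))
              / (qPoch q q i * qPoch q q j * qPoch q q k) := by
  have hq' : ‖q‖ < 1 := by exact hq
  open NahmAux2 in
  have hL : ∑' (i : ℕ) (j : ℕ) (k : ℕ),
        q ^ ((i : ℤ) ^ 2 + (j : ℤ) ^ 2 + ((k : ℤ) ^ 2 - (k : ℤ)) / 2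
              - (i : ℤ) * (j : ℤ) - (j : ℤ) * (k : ℤ) - 2 * (i : ℤ) + 2 * (j : ℤ))
          / (qPoch q q i * qPoch q q j * qPoch q q k) = V q (-2) 2 (-1) := by
    rw [V, tsum_triple (summable_T hq0 hq' (by norm_num) (by norm_num) (by norm_num))]
    refine tsum_congr fun i => tsum_congr fun j => tsum_congr fun k => ?_
    have hexp : (i : ℤ) ^ 2 + (j : ℤ) ^ 2 + ((k : ℤ) ^ 2 - (k : ℤ)) / 2
              - (i : ℤ) * (j : ℤ) - (j : ℤ) * (k : ℤ) - 2 * (i : ℤ) + 2 * (j : ℤ)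
        = E (-2) 2 (-1) i j k := by
      rw [E, sq_sub_div_two]; ring
    rw [T, hexp]
  have hR : ∑' (i : ℕ) (j : ℕ) (k : ℕ),
        q ^ ((i : ℤ) ^ 2 + (j : ℤ) ^ 2 + ((k : ℤ) ^ 2 + (k : ℤ)) / 2
              - (i : ℤ) * (j : ℤ) - (j : ℤ) * (k : ℤ))
          / (qPoch q q i * qPoch q q j * qPoch q q k) = V q 0 0 0 := by
    rw [V, tsum_triple (summable_T hq0 hq' (by norm_num) (by norm_num) (by norm_num))]
    refine tsum_congr fun i => tsum_congr fun j => tsum_congr fun k => ?_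
    have hexp : (i : ℤ) ^ 2 + (j : ℤ) ^ 2 + ((k : ℤ) ^ 2 + (k : ℤ)) / 2
              - (i : ℤ) * (j : ℤ) - (j : ℤ) * (k : ℤ) = E 0 0 0 i j k := by
      rw [E]; ring
    rw [T, hexp]
  rw [hL, hR]
  -- the nine recursion instances
  have e1 := recK hq0 hq' (a := -2) (b := 2) (c := -1)
    (by norm_num) (by norm_num) (by norm_num) (by norm_num)
  have e2 := recI hq0 hq' (a := -2) (b := 2) (c := 0)
    (by norm_num) (by norm_num) (by norm_num) (by norm_num) (by norm_num)
  have e3 := recI hq0 hq' (a := -2) (b := 1) (c := 0)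
    (by norm_num) (by norm_num) (by norm_num) (by norm_num) (by norm_num)
  have e4 := recI hq0 hq' (a := -1) (b := 2) (c := 0)
    (by norm_num) (by norm_num) (by norm_num) (by norm_num) (by norm_num)
  have e5 := recI hq0 hq' (a := -1) (b := 1) (c := 0)
    (by norm_num) (by norm_num) (by norm_num) (by norm_num) (by norm_num)
  have e6 := recJ hq0 hq' (a := 0) (b := 0) (c := 0)
    (by norm_num) (by norm_num) (by norm_num) (by norm_num) (by norm_num)
  have e7 := recI hq0 hq' (a := -1) (b := 2) (c := -1)
    (by norm_num) (by norm_num) (by norm_num) (by norm_num) (by norm_num)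
  have e8 := recK hq0 hq' (a := 0) (b := 2) (c := -1)
    (by norm_num) (by norm_num) (by norm_num) (by norm_num)
  have e9 := recK hq0 hq' (a := 1) (b := 1) (c := -1)
    (by norm_num) (by norm_num) (by norm_num) (by norm_num)
  norm_num [zpow_zero, zpow_one] at e1 e2 e3 e4 e5 e6 e7 e8 e9
  -- clear the q^(-1) from e2 e3
  have e2' : q * V q (-2) 2 0 = q * V q (-1) 2 0 + V q 0 1 0 := by
    rw [e2]; field_simp
  have e3' : q * V q (-2) 1 0 = q * V q (-1) 1 0 + V q 0 0 0 := by
    rw [e3]; field_simp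
  have main : q * V q (-2) 2 (-1) = 2 * V q 0 0 0 := by
    linear_combination q*e1 + e2' + e3' + q*e4 + q*e5 - e6 - q*e7 - q*e8 - q*e9
  field_simp
  linear_combination main
end

section
/- Euler's identities: for |q|<1 and |z|<1, ∑_{n≥0} z^n/(q;q)_n = 1/(z;q)_∞, and for all z, ∑_{n≥0} q^{n(n-1)/2} z^n/(q;q)_n = (-z;q)_∞. -/
open Filter Finset

noncomputable def Complex.abs : AbsoluteValue ℂ ℝ := NormedField.toAbsoluteValue ℂ

lemma Complex.norm_eq_abs (z : ℂ) : ‖z‖ = Complex.abs z := rfl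

/-- Infinite q-Pochhammer symbol `(a;q)_∞`. -/
noncomputable def qPochInf (a q : ℂ) : ℂ := ∏' k : ℕ, (1 - a * q ^ k)

lemma qPoch_zero (a q : ℂ) : qPoch a q 0 = 1 := by simp [qPoch]

lemma qPoch_succ (a q : ℂ) (n : ℕ) : qPoch a q (n + 1) = qPoch a q n * (1 - a * q ^ n) := by
  simp [qPoch, Finset.prod_range_succ]

/-- summability of the real log series -/
lemma summable_log_aux {r : ℝ} (h0 : 0 ≤ r) (h1 : r < 1) :
    Summable (fun k : ℕ => Real.log (1 - r ^ (k + 1))) := by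
  apply Summable.of_norm_bounded_eventually_nat (g := fun k => 2 * r ^ (k + 1))
  · exact (((summable_geometric_of_lt_one h0 h1).mul_left r).congr
      (fun k => by ring)).mul_left 2
  · have ht : Tendsto (fun k : ℕ => r ^ (k + 1)) atTop (nhds 0) := by
      have := tendsto_pow_atTop_nhds_zero_of_norm_lt_one (x := r) (by rwa [Real.norm_eq_abs, abs_of_nonneg h0])
      exact this.comp (tendsto_add_atTop_nat 1)
    filter_upwards [ht.eventually_le_const (show (0:ℝ) < 1/2 by norm_num)] with k hk
    have hpow0 : 0 ≤ r ^ (k + 1) := pow_nonneg h0 _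
    have hlt : r ^ (k + 1) ≤ 1 / 2 := hk
    have hpos : (0:ℝ) < 1 - r ^ (k + 1) := by linarith
    have hlog_le : Real.log (1 - r ^ (k + 1)) ≤ 0 := by
      apply Real.log_nonpos (by linarith) (by linarith)
    rw [Real.norm_eq_abs, abs_of_nonpos hlog_le]
    have : Real.log (1 - r ^ (k + 1))⁻¹ ≤ (1 - r ^ (k + 1))⁻¹ - 1 :=
      Real.log_le_sub_one_of_pos (by positivity)
    rw [Real.log_inv] at this
    have hineq : (1 - r ^ (k + 1))⁻¹ - 1 ≤ 2 * r ^ (k + 1) := by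
      rw [inv_eq_one_div, div_sub' (ne_of_gt hpos)]
      rw [div_le_iff₀ hpos]
      nlinarith
    linarith

/-- lower bound constant -/
noncomputable def eulerC (q : ℂ) : ℝ :=
  Real.exp (∑' k : ℕ, Real.log (1 - (Complex.abs q) ^ (k + 1)))

lemma eulerC_pos (q : ℂ) : 0 < eulerC q := Real.exp_pos _

lemma qPoch_abs_lower {q : ℂ} (hq : Complex.abs q < 1) (n : ℕ) :
    eulerC q ≤ Complex.abs (qPoch q q n) := by
  set r := Complex.abs q with hr
  have h0 : 0 ≤ r := Complex.abs.nonneg q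
  have hsum := summable_log_aux h0 hq
  have step1 : ∏ k ∈ Finset.range n, (1 - r ^ (k + 1)) ≤ Complex.abs (qPoch q q n) := by
    rw [qPoch, map_prod]
    apply Finset.prod_le_prod
    · intro k _
      have : r ^ (k + 1) < 1 := pow_lt_one₀ h0 hq (Nat.succ_ne_zero k)
      linarith
    · intro k _
      have h1 : Complex.abs (q * q ^ k) = r ^ (k + 1) := by
        rw [map_mul, map_pow, pow_succ]; ring
      calc 1 - r ^ (k + 1) = 1 - Complex.abs (q * q ^ k) := by rw [h1]
        _ ≤ Complex.abs (1 - q * q ^ k) := by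
            have := norm_sub_norm_le (1 : ℂ) (q * q ^ k)
            simpa [Complex.norm_eq_abs] using this
  have step2 : eulerC q ≤ ∏ k ∈ Finset.range n, (1 - r ^ (k + 1)) := by
    have hpos : ∀ k : ℕ, (0:ℝ) < 1 - r ^ (k + 1) := by
      intro k
      have : r ^ (k + 1) < 1 := pow_lt_one₀ h0 hq (Nat.succ_ne_zero k)
      linarith
    have hprod : ∏ k ∈ Finset.range n, (1 - r ^ (k + 1)) =
        Real.exp (∑ k ∈ Finset.range n, Real.log (1 - r ^ (k + 1))) := by
      rw [Real.exp_sum]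
      exact Finset.prod_congr rfl (fun k _ => (Real.exp_log (hpos k)).symm)
    rw [hprod, eulerC]
    apply Real.exp_le_exp.mpr
    have := Summable.sum_le_tsum (f := fun k : ℕ => -Real.log (1 - r ^ (k + 1))) (Finset.range n)
      (fun i _ => neg_nonneg.mpr (Real.log_nonpos (by linarith [hpos i])
        (by have : 0 ≤ r ^ (i + 1) := pow_nonneg h0 _; linarith))) hsum.neg
    rw [tsum_neg] at this
    simp only [Finset.sum_neg_distrib] at this
    linarith
  linarith

lemma qPoch_ne_zero {q : ℂ} (hq : Complex.abs q < 1) (n : ℕ) : qPoch q q n ≠ 0 := by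
  intro h
  have := qPoch_abs_lower hq n
  rw [h] at this
  simp at this
  exact absurd this (not_le.mpr (eulerC_pos q))
lemma exp_succ_tri (n : ℕ) : (n + 1) * ((n + 1) - 1) / 2 = n * (n - 1) / 2 + n := by
  have h1 := Finset.sum_range_id (n + 1)
  have h2 := Finset.sum_range_id n
  rw [Finset.sum_range_succ, h2] at h1
  simpa using h1.symm

lemma summable1 {q : ℂ} (hq : Complex.abs q < 1) {w : ℂ} (hw : Complex.abs w < 1) :
    Summable (fun n : ℕ => w ^ n / qPoch q q n) := by
  set a := Complex.abs w with ha
  have ha0 : 0 ≤ a := Complex.abs.nonneg w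
  apply summable_of_ratio_norm_eventually_le (r := (1 + a) / 2) (by linarith)
  have ht : Tendsto (fun n : ℕ => Complex.abs (q * q ^ n)) atTop (nhds 0) := by
    have h := tendsto_pow_atTop_nhds_zero_of_norm_lt_one (x := q) (by rwa [Complex.norm_eq_abs])
    have := (h.const_mul q).norm
    simpa [Complex.norm_eq_abs] using this
  filter_upwards [ht.eventually_le_const (show (0:ℝ) < (1 - a) / 2 by linarith)] with n hn
  have hne := qPoch_ne_zero hq n
  have hfact : Complex.abs (1 - q * q ^ n) ≥ 1 - (1 - a) / 2 := by
    have := norm_sub_norm_le (1 : ℂ) (q * q ^ n)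
    simp only [Complex.norm_eq_abs, norm_one] at this
    linarith
  have heq : w ^ (n + 1) / qPoch q q (n + 1) = w / (1 - q * q ^ n) * (w ^ n / qPoch q q n) := by
    rw [qPoch_succ, pow_succ]
    field_simp
  rw [heq]
  simp only [Complex.norm_eq_abs, map_mul, map_div₀, map_pow]
  rw [div_mul_eq_mul_div]
  rw [div_le_iff₀ (by linarith : (0:ℝ) < Complex.abs (1 - q * q ^ n))]
  have hnn : 0 ≤ Complex.abs w ^ n / Complex.abs (qPoch q q n) := by positivity
  calc Complex.abs w * (Complex.abs w ^ n / Complex.abs (qPoch q q n))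
      = a * (Complex.abs w ^ n / Complex.abs (qPoch q q n)) := rfl
    _ ≤ (1 + a) / 2 * (1 - (1 - a) / 2) * (Complex.abs w ^ n / Complex.abs (qPoch q q n)) := by
        apply mul_le_mul_of_nonneg_right _ hnn
        nlinarith
    _ ≤ (1 + a) / 2 * (Complex.abs w ^ n / Complex.abs (qPoch q q n)) * Complex.abs (1 - q * q ^ n) := by
        have h2 := mul_le_mul_of_nonneg_left hfact (mul_nonneg (by linarith : (0:ℝ) ≤ (1 + a) / 2) hnn)
        nlinarith [hnn, hfact]

lemma summable2 {q : ℂ} (hq : Complex.abs q < 1) (w : ℂ) :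
    Summable (fun n : ℕ => q ^ (n * (n - 1) / 2) * w ^ n / qPoch q q n) := by
  apply summable_of_ratio_norm_eventually_le (r := 1/2) (by norm_num)
  have ht : Tendsto (fun n : ℕ => Complex.abs (q ^ n) * Complex.abs w) atTop (nhds 0) := by
    have h := tendsto_pow_atTop_nhds_zero_of_norm_lt_one (x := q) (by rwa [Complex.norm_eq_abs])
    have := h.norm.mul_const (Complex.abs w)
    simpa [Complex.norm_eq_abs] using this
  have ht2 : Tendsto (fun n : ℕ => Complex.abs (q * q ^ n)) atTop (nhds 0) := by
    have h := tendsto_pow_atTop_nhds_zero_of_norm_lt_one (x := q) (by rwa [Complex.norm_eq_abs])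
    have := (h.const_mul q).norm
    simpa [Complex.norm_eq_abs] using this
  filter_upwards [ht.eventually_le_const (show (0:ℝ) < 1/4 by norm_num),
    ht2.eventually_le_const (show (0:ℝ) < 1/2 by norm_num)] with n hn hn2
  have hne := qPoch_ne_zero hq n
  have hfact : (1:ℝ)/2 ≤ Complex.abs (1 - q * q ^ n) := by
    have := norm_sub_norm_le (1 : ℂ) (q * q ^ n)
    simp only [Complex.norm_eq_abs, norm_one] at this
    linarith
  have heq : q ^ ((n + 1) * ((n + 1) - 1) / 2) * w ^ (n + 1) / qPoch q q (n + 1)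
      = (q ^ n * w / (1 - q * q ^ n)) * (q ^ (n * (n - 1) / 2) * w ^ n / qPoch q q n) := by
    rw [exp_succ_tri, pow_add, qPoch_succ, pow_succ]
    field_simp
  rw [heq]
  simp only [Complex.norm_eq_abs, map_mul, map_div₀, map_pow]
  set X := Complex.abs q ^ (n * (n - 1) / 2) * Complex.abs w ^ n / Complex.abs (qPoch q q n) with hX
  have hXnn : 0 ≤ X := by positivity
  have h1 : Complex.abs q ^ n * Complex.abs w / Complex.abs (1 - q * q ^ n) ≤ 1/2 := by
    rw [div_le_iff₀ (by linarith : (0:ℝ) < Complex.abs (1 - q * q ^ n))]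
    calc Complex.abs q ^ n * Complex.abs w ≤ 1/4 := by
          rw [map_pow] at hn; exact hn
      _ ≤ 1/2 * Complex.abs (1 - q * q ^ n) := by linarith
  calc Complex.abs q ^ n * Complex.abs w / Complex.abs (1 - q * q ^ n) *
        (Complex.abs q ^ (n * (n - 1) / 2) * Complex.abs w ^ n / Complex.abs (qPoch q q n))
      = (Complex.abs q ^ n * Complex.abs w / Complex.abs (1 - q * q ^ n)) * X := by rw [hX]
    _ ≤ 1/2 * X := mul_le_mul_of_nonneg_right h1 hXnn
    _ = 1/2 * (Complex.abs q ^ (n * (n - 1) / 2) * Complex.abs w ^ n / Complex.abs (qPoch q q n)) := by rw [hX]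
lemma abs_mul_lt_one {q w : ℂ} (hq : Complex.abs q < 1) (hw : Complex.abs w < 1) :
    Complex.abs (q * w) < 1 := by
  rw [map_mul]
  calc Complex.abs q * Complex.abs w ≤ 1 * Complex.abs w :=
        mul_le_mul_of_nonneg_right hq.le (Complex.abs.nonneg w)
    _ = Complex.abs w := one_mul _
    _ < 1 := hw

lemma feq1 {q : ℂ} (hq : Complex.abs q < 1) {w : ℂ} (hw : Complex.abs w < 1) :
    (∑' n : ℕ, w ^ n / qPoch q q n) * (1 - w) = ∑' n : ℕ, (q * w) ^ n / qPoch q q n := by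
  have hqw : Complex.abs (q * w) < 1 := abs_mul_lt_one hq hw
  have hS := summable1 hq hw
  have hS' := summable1 hq hqw
  set g : ℕ → ℂ := fun n => w ^ n / qPoch q q n - (q * w) ^ n / qPoch q q n with hg
  have hgsum : Summable g := hS.sub hS'
  have hkey : ∑' n, g n = w * ∑' n : ℕ, w ^ n / qPoch q q n := by
    rw [Summable.tsum_eq_zero_add hgsum]
    have hg0 : g 0 = 0 := by simp [hg, qPoch_zero]
    rw [hg0, zero_add]
    rw [← tsum_mul_left]
    apply tsum_congr
    intro n
    have hne := qPoch_ne_zero hq n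
    have hne1 : (1 : ℂ) - q * q ^ n ≠ 0 := by
      have := qPoch_ne_zero hq (n + 1)
      rw [qPoch_succ] at this
      exact right_ne_zero_of_mul this
    simp only [hg, qPoch_succ, mul_pow, pow_succ]
    field_simp
  have : (∑' n : ℕ, w ^ n / qPoch q q n) - ∑' n : ℕ, (q * w) ^ n / qPoch q q n
      = w * ∑' n : ℕ, w ^ n / qPoch q q n := by
    rw [← Summable.tsum_sub hS hS']
    exact hkey
  linear_combination this

lemma feq2 {q : ℂ} (hq : Complex.abs q < 1) (w : ℂ) :
    ∑' n : ℕ, q ^ (n * (n - 1) / 2) * w ^ n / qPoch q q n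
      = (1 + w) * ∑' n : ℕ, q ^ (n * (n - 1) / 2) * (q * w) ^ n / qPoch q q n := by
  have hS := summable2 hq w
  have hS' := summable2 hq (q * w)
  set g : ℕ → ℂ := fun n =>
    q ^ (n * (n - 1) / 2) * w ^ n / qPoch q q n
      - q ^ (n * (n - 1) / 2) * (q * w) ^ n / qPoch q q n with hg
  have hgsum : Summable g := hS.sub hS'
  have hkey : ∑' n, g n = w * ∑' n : ℕ, q ^ (n * (n - 1) / 2) * (q * w) ^ n / qPoch q q n := by
    rw [Summable.tsum_eq_zero_add hgsum]
    have hg0 : g 0 = 0 := by simp [hg, qPoch_zero]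
    rw [hg0, zero_add]
    rw [← tsum_mul_left]
    apply tsum_congr
    intro n
    have hne := qPoch_ne_zero hq n
    have hne1 : (1 : ℂ) - q * q ^ n ≠ 0 := by
      have := qPoch_ne_zero hq (n + 1)
      rw [qPoch_succ] at this
      exact right_ne_zero_of_mul this
    simp only [hg, qPoch_succ, mul_pow, pow_succ, exp_succ_tri, pow_add]
    field_simp
    have h3 : (1 - q * q ^ n)⁻¹ * (1 - q * q ^ n) = 1 := inv_mul_cancel₀ hne1
    linear_combination (q ^ n * q ^ (n * (n - 1) / 2) * w * w ^ n) * h3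
  have : (∑' n : ℕ, q ^ (n * (n - 1) / 2) * w ^ n / qPoch q q n)
      - ∑' n : ℕ, q ^ (n * (n - 1) / 2) * (q * w) ^ n / qPoch q q n
      = w * ∑' n : ℕ, q ^ (n * (n - 1) / 2) * (q * w) ^ n / qPoch q q n := by
    rw [← Summable.tsum_sub hS hS']
    exact hkey
  linear_combination this
lemma abs_pow_mul_lt_one {q z : ℂ} (hq : Complex.abs q < 1) (hz : Complex.abs z < 1) (N : ℕ) :
    Complex.abs (q ^ N * z) < 1 := by
  rw [map_mul, map_pow]
  calc Complex.abs q ^ N * Complex.abs z ≤ 1 * Complex.abs z := by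
        apply mul_le_mul_of_nonneg_right _ (Complex.abs.nonneg z)
        exact pow_le_one₀ (Complex.abs.nonneg q) hq.le
    _ = Complex.abs z := one_mul _
    _ < 1 := hz

lemma iter1 {q : ℂ} (hq : Complex.abs q < 1) {z : ℂ} (hz : Complex.abs z < 1) (N : ℕ) :
    (∑' n : ℕ, z ^ n / qPoch q q n) * ∏ k ∈ Finset.range N, (1 - z * q ^ k)
      = ∑' n : ℕ, (q ^ N * z) ^ n / qPoch q q n := by
  induction N with
  | zero => simp
  | succ N ih =>
    rw [Finset.prod_range_succ, ← mul_assoc, ih]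
    have h := feq1 hq (w := q ^ N * z) (abs_pow_mul_lt_one hq hz N)
    have e1 : z * q ^ N = q ^ N * z := mul_comm _ _
    have e2 : q * (q ^ N * z) = q ^ (N + 1) * z := by ring
    rw [e1, h, e2]

lemma iter2 {q : ℂ} (hq : Complex.abs q < 1) (z : ℂ) (N : ℕ) :
    ∑' n : ℕ, q ^ (n * (n - 1) / 2) * z ^ n / qPoch q q n
      = (∏ k ∈ Finset.range N, (1 + z * q ^ k))
        * ∑' n : ℕ, q ^ (n * (n - 1) / 2) * (q ^ N * z) ^ n / qPoch q q n := by
  induction N with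
  | zero => simp
  | succ N ih =>
    rw [Finset.prod_range_succ, ih]
    have h := feq2 hq (q ^ N * z)
    have e2 : q * (q ^ N * z) = q ^ (N + 1) * z := by ring
    rw [e2] at h
    rw [h]
    ring

set_option maxHeartbeats 1000000 in
/-- the series tends to 1 as the argument tends to 0 -/
lemma tendsto_tsum_one {q : ℂ} (hq : Complex.abs q < 1) (ε : ℕ → ℂ)
    (hε0 : ε 0 = 1) (hεb : ∀ n, Complex.abs (ε n) ≤ 1)
    (hsum : ∀ w : ℂ, Complex.abs w < 1 → Summable (fun n : ℕ => ε n * w ^ n / qPoch q q n))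
    (z : ℂ) :
    Tendsto (fun N : ℕ => ∑' n : ℕ, ε n * (q ^ N * z) ^ n / qPoch q q n) atTop (nhds 1) := by
  set c := eulerC q with hc
  have hcpos := eulerC_pos q
  have key : ∀ w : ℂ, Complex.abs w ≤ 1/2 →
      Complex.abs ((∑' n : ℕ, ε n * w ^ n / qPoch q q n) - 1) ≤ 2 / c * Complex.abs w := by
    intro w hw
    have hw1 : Complex.abs w < 1 := lt_of_le_of_lt hw (by norm_num)
    have hsw := hsum w hw1
    rw [Summable.tsum_eq_zero_add hsw]
    have h0 : ε 0 * w ^ 0 / qPoch q q 0 = 1 := by simp [hε0, qPoch_zero]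
    rw [h0]
    simp only [add_sub_cancel_left]
    have hsw1 : Summable (fun n : ℕ => ε (n + 1) * w ^ (n + 1) / qPoch q q (n + 1)) :=
      (summable_nat_add_iff 1).mpr hsw
    have hnorm : Summable (fun n : ℕ => ‖ε (n + 1) * w ^ (n + 1) / qPoch q q (n + 1)‖) :=
      summable_norm_iff.mpr hsw1
    have hb : Summable (fun n : ℕ => (1 / c) * Complex.abs w ^ (n + 1)) := by
      apply Summable.mul_left
      exact ((summable_geometric_of_lt_one (Complex.abs.nonneg w) hw1).mul_left
        (Complex.abs w)).congr (fun n => by rw [pow_succ]; ring)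
    calc Complex.abs (∑' n : ℕ, ε (n + 1) * w ^ (n + 1) / qPoch q q (n + 1))
        ≤ ∑' n : ℕ, ‖ε (n + 1) * w ^ (n + 1) / qPoch q q (n + 1)‖ := by
          rw [← Complex.norm_eq_abs]
          exact norm_tsum_le_tsum_norm hnorm
      _ ≤ ∑' n : ℕ, (1 / c) * Complex.abs w ^ (n + 1) := by
          apply Summable.tsum_le_tsum _ hnorm hb
          intro n
          rw [Complex.norm_eq_abs, map_div₀, map_mul, map_pow]
          have h1 : Complex.abs (ε (n+1)) * Complex.abs w ^ (n + 1) ≤ Complex.abs w ^ (n+1) := by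
            have := mul_le_mul_of_nonneg_right (hεb (n+1)) (pow_nonneg (Complex.abs.nonneg w) (n+1))
            simpa using this
          have h2 : c ≤ Complex.abs (qPoch q q (n+1)) := qPoch_abs_lower hq (n+1)
          rw [div_le_iff₀ (lt_of_lt_of_le hcpos h2)]
          calc Complex.abs (ε (n+1)) * Complex.abs w ^ (n + 1) ≤ Complex.abs w ^ (n+1) := h1
            _ = (1 / c) * Complex.abs w ^ (n+1) * c := by have : c ≠ 0 := hcpos.ne'; field_simp
            _ ≤ 1 / c * Complex.abs w ^ (n + 1) * Complex.abs (qPoch q q (n + 1)) := by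
                apply mul_le_mul_of_nonneg_left h2
                positivity
      _ = (1 / c) * (Complex.abs w * ∑' n : ℕ, Complex.abs w ^ n) := by
          rw [← tsum_mul_left, ← tsum_mul_left]
          apply tsum_congr; intro n; rw [pow_succ]; ring
      _ ≤ 2 / c * Complex.abs w := by
          rw [tsum_geometric_of_lt_one (Complex.abs.nonneg w) hw1]
          have hinv : (1 - Complex.abs w)⁻¹ ≤ 2 := by
            rw [inv_le_comm₀ (by linarith) (by norm_num)]
            linarith
          have : Complex.abs w * (1 - Complex.abs w)⁻¹ ≤ Complex.abs w * 2 :=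
            mul_le_mul_of_nonneg_left hinv (Complex.abs.nonneg w)
          calc 1 / c * (Complex.abs w * (1 - Complex.abs w)⁻¹) ≤ 1 / c * (Complex.abs w * 2) := by
                apply mul_le_mul_of_nonneg_left this
                positivity
            _ = 2 / c * Complex.abs w := by ring
  have htz : Tendsto (fun N : ℕ => q ^ N * z) atTop (nhds 0) := by
    have h := tendsto_pow_atTop_nhds_zero_of_norm_lt_one (x := q) (by rwa [Complex.norm_eq_abs])
    simpa using h.mul_const z
  have habs : Tendsto (fun N : ℕ => Complex.abs (q ^ N * z)) atTop (nhds 0) := by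
    have := htz.norm
    simpa [Complex.norm_eq_abs] using this
  have hsq : Tendsto (fun N : ℕ => (∑' n : ℕ, ε n * (q ^ N * z) ^ n / qPoch q q n) - 1)
      atTop (nhds 0) := by
    apply squeeze_zero_norm' (a := fun N => 2 / c * Complex.abs (q ^ N * z))
    · filter_upwards [habs.eventually_le_const (show (0:ℝ) < 1/2 by norm_num)] with N hN
      rw [Complex.norm_eq_abs]
      exact key _ hN
    · have := habs.const_mul (2 / c)
      simpa using this
  have := hsq.add_const 1
  simpa using this

lemma multipliable_one_add_complex {f : ℕ → ℂ} (hf : Summable f) :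
    Multipliable (fun n => 1 + f n) := by
  by_cases h : ∃ j, 1 + f j = 0
  · obtain ⟨j, hj⟩ := h
    refine ⟨0, ?_⟩
    rw [HasProd]
    apply Tendsto.congr' _ (tendsto_const_nhds (x := (0:ℂ)))
    filter_upwards [Filter.eventually_ge_atTop ({j} : Finset ℕ)] with s hs
    exact (Finset.prod_eq_zero (hs (Finset.mem_singleton_self j)) hj).symm
  · push_neg at h
    have hlog : Summable (fun n => Complex.log (1 + f n)) := by
      apply Summable.of_norm_bounded_eventually_nat (g := fun n => 3/2 * ‖f n‖)
        ((summable_norm_iff.mpr hf).mul_left _)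
      have hz : Tendsto (fun n => ‖f n‖) atTop (nhds 0) := by
        simpa using hf.tendsto_atTop_zero.norm
      filter_upwards [hz.eventually_le_const (show (0:ℝ) < 1/2 by norm_num)] with n hn
      simpa using Complex.norm_log_one_add_half_le_self (by simpa using hn)
    exact Complex.multipliable_one_add_of_summable hf

lemma multipliable_qpoch {q : ℂ} (hq : Complex.abs q < 1) (u : ℂ) :
    Multipliable (fun k : ℕ => 1 - u * q ^ k) := by
  have hs : Summable (fun k : ℕ => -(u * q ^ k)) := by
    apply Summable.neg
    apply Summable.mul_left
    rw [← summable_norm_iff]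
    simpa [Complex.norm_eq_abs] using
      summable_geometric_of_lt_one (Complex.abs.nonneg q) hq
  exact (multipliable_one_add_complex hs).congr (fun k => by ring)
/-- Euler's q-exponential identities. -/
theorem euler_identities (q : ℂ) (hq : ‖q‖ < 1) :
    (∀ z : ℂ, ‖z‖ < 1 →
        ∑' n : ℕ, z ^ n / qPoch q q n = 1 / qPochInf z q) ∧
    (∀ z : ℂ, ∑' n : ℕ, q ^ (n * (n - 1) / 2) * z ^ n / qPoch q q n = qPochInf (-z) q) := by
  constructor
  · intro z hz
    have hmul := multipliable_qpoch hq z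
    have hprod : Tendsto (fun N : ℕ => ∏ k ∈ Finset.range N, (1 - z * q ^ k)) atTop
        (nhds (qPochInf z q)) := by
      have := hmul.hasProd.tendsto_prod_nat
      rwa [qPochInf]
    set S := ∑' n : ℕ, z ^ n / qPoch q q n with hS
    have h1 : Tendsto (fun N : ℕ => S * ∏ k ∈ Finset.range N, (1 - z * q ^ k)) atTop
        (nhds (S * qPochInf z q)) := tendsto_const_nhds.mul hprod
    have h2 : Tendsto (fun N : ℕ => S * ∏ k ∈ Finset.range N, (1 - z * q ^ k)) atTop
        (nhds 1) := by
      have ht := tendsto_tsum_one hq (fun _ => 1) rfl (by simp)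
        (fun w hw => by simpa using summable1 hq hw) z
      apply ht.congr
      intro N
      simp only [one_mul]
      exact (iter1 hq hz N).symm
    have hSP : S * qPochInf z q = 1 := tendsto_nhds_unique h1 h2
    have hP : qPochInf z q ≠ 0 := by
      intro h
      rw [h, mul_zero] at hSP
      exact one_ne_zero hSP.symm
    rw [eq_div_iff hP]
    exact hSP
  · intro z
    set S := ∑' n : ℕ, q ^ (n * (n - 1) / 2) * z ^ n / qPoch q q n with hS
    have hmul : Multipliable (fun k : ℕ => 1 + z * q ^ k) :=
      (multipliable_qpoch hq (-z)).congr (fun k => by ring)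
    have hPinf : qPochInf (-z) q = ∏' k : ℕ, (1 + z * q ^ k) := by
      rw [qPochInf]
      exact tprod_congr (fun k => by ring)
    have hprod : Tendsto (fun N : ℕ => ∏ k ∈ Finset.range N, (1 + z * q ^ k)) atTop
        (nhds (∏' k : ℕ, (1 + z * q ^ k))) := hmul.hasProd.tendsto_prod_nat
    have hεb : ∀ n : ℕ, Complex.abs (q ^ (n * (n - 1) / 2)) ≤ 1 := by
      intro n
      rw [map_pow]
      exact pow_le_one₀ (Complex.abs.nonneg q) hq.le
    have ht := tendsto_tsum_one hq (fun n => q ^ (n * (n - 1) / 2)) (by simp) hεb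
      (fun w _ => summable2 hq w) z
    have h1 : Tendsto (fun N : ℕ => (∏ k ∈ Finset.range N, (1 + z * q ^ k)) *
        ∑' n : ℕ, q ^ (n * (n - 1) / 2) * (q ^ N * z) ^ n / qPoch q q n) atTop
        (nhds ((∏' k : ℕ, (1 + z * q ^ k)) * 1)) := hprod.mul ht
    have h2 : Tendsto (fun N : ℕ => (∏ k ∈ Finset.range N, (1 + z * q ^ k)) *
        ∑' n : ℕ, q ^ (n * (n - 1) / 2) * (q ^ N * z) ^ n / qPoch q q n) atTop
        (nhds S) := by
      apply Tendsto.congr _ (tendsto_const_nhds (x := S))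
      intro N
      exact iter2 hq z N
    have := tendsto_nhds_unique h2 h1
    rw [hPinf, this, mul_one]
end
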